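/- Let φ(u) = (2π)^{-1/2} exp(−u²/2) denote the standard normal density on ℝ. For t > 0 and α ∈ ℝ, define the midpoint-quantized function ψ_{t,α}(u) = φ( α + (⌊(u − α)/t⌋ + 1/2)·t ) and the normalizing constant c_{t,α} = ∫_ℝ ψ_{t,α}(u) du, and set φ_{t,α} = ψ_{t,α}/c_{t,α}. Then the relative entropy of the quantized Gaussian from the Gaussian vanishes uniformly in the offset: sup_{α∈[0,t]} ∫_ℝ φ_{t,α}(u) · log( φ_{t,α}(u) / φ(u) ) du → 0 as t → 0⁺. -/

import Mathlib

open scoped ENNReal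
open MeasureTheory

/-- The standard normal density on `ℝ`. -/
noncomputable def stdGauss (u : ℝ) : ℝ :=
  (2 * Real.pi) ^ (-(1 : ℝ) / 2) * Real.exp (-u ^ 2 / 2)

/-- The midpoint quantization of the standard normal density with span `t` and offset `α`. -/
noncomputable def quantGaussUnnormalized (t α u : ℝ) : ℝ :=
  stdGauss (α + ((⌊(u - α) / t⌋ : ℝ) + 1 / 2) * t)

/-- The normalizing constant of the quantized standard normal density. -/
noncomputable def quantGaussConst (t α : ℝ) : ℝ≥0∞ :=
  ∫⁻ u, ENNReal.ofReal (quantGaussUnnormalized t α u)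

/-- The normalized quantized standard normal density. -/
noncomputable def quantGauss (t α u : ℝ) : ℝ :=
  quantGaussUnnormalized t α u / (quantGaussConst t α).toReal

/- ### Auxiliary definitions and lemmas -/

/-- Midpoint of the quantization cell containing `u`. -/
noncomputable def qMid (t α u : ℝ) : ℝ := α + ((⌊(u - α) / t⌋ : ℝ) + 1 / 2) * t

lemma quantU_eq_mid (t α u : ℝ) : quantGaussUnnormalized t α u = stdGauss (qMid t α u) := rfl

lemma qMid_sub_abs {t : ℝ} (ht : 0 < t) (α u : ℝ) : |qMid t α u - u| ≤ t / 2 := by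
  set x := (u - α) / t with hx
  have hxu : u - α = x * t := by rw [hx]; exact (div_mul_cancel₀ (u - α) ht.ne').symm
  have h1 : (⌊x⌋ : ℝ) ≤ x := Int.floor_le x
  have h2 : x < ⌊x⌋ + 1 := Int.lt_floor_add_one x
  have heq : qMid t α u - u = ((⌊x⌋ : ℝ) - x + 1 / 2) * t := by
    simp only [qMid, ← hx]; linear_combination (-1 : ℝ) * hxu
  rw [heq, abs_mul, abs_of_pos ht]
  have : |(⌊x⌋ : ℝ) - x + 1 / 2| ≤ 1 / 2 := by rw [abs_le]; constructor <;> linarith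
  nlinarith

lemma r_abs_le {t : ℝ} (ht : 0 < t) (α u : ℝ) :
    |(u ^ 2 - (qMid t α u) ^ 2) / 2| ≤ t * |u| / 2 + t ^ 2 / 8 := by
  have hs := abs_le.mp (qMid_sub_abs ht α u)
  set s := qMid t α u - u with hsdef
  have hm : qMid t α u = u + s := by rw [hsdef]; ring
  have hu1 : -|u| ≤ u := neg_abs_le u
  have hu2 : u ≤ |u| := le_abs_self u
  rw [hm, abs_le]
  constructor
  · nlinarith [mul_nonneg (by linarith : (0:ℝ) ≤ |u| + u) (by linarith : (0:ℝ) ≤ t/2 - s),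
      mul_nonneg (by linarith : (0:ℝ) ≤ |u| - u) (by linarith : (0:ℝ) ≤ t/2 + s),
      mul_nonneg (by linarith : (0:ℝ) ≤ t/2 - s) (by linarith : (0:ℝ) ≤ t/2 + s)]
  · nlinarith [mul_nonneg (by linarith : (0:ℝ) ≤ |u| + u) (by linarith : (0:ℝ) ≤ t/2 + s),
      mul_nonneg (by linarith : (0:ℝ) ≤ |u| - u) (by linarith : (0:ℝ) ≤ t/2 - s),
      sq_nonneg s]

lemma quantU_eq_exp (t α u : ℝ) :
    quantGaussUnnormalized t α u
      = stdGauss u * Real.exp ((u ^ 2 - (qMid t α u) ^ 2) / 2) := by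
  rw [quantU_eq_mid]
  simp only [stdGauss]
  rw [mul_assoc, ← Real.exp_add]
  congr 1
  ring

lemma stdGauss_pos (u : ℝ) : 0 < stdGauss u :=
  mul_pos (Real.rpow_pos_of_pos (by positivity) _) (Real.exp_pos _)

lemma coeff_le_one : (2 * Real.pi) ^ (-(1 : ℝ) / 2) ≤ 1 :=
  Real.rpow_le_one_of_one_le_of_nonpos (by nlinarith [Real.pi_gt_three]) (by norm_num)

lemma stdGauss_le (u : ℝ) : stdGauss u ≤ Real.exp (-u ^ 2 / 2) := by
  have := coeff_le_one
  have h := Real.exp_pos (-u ^ 2 / 2)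
  calc stdGauss u = (2 * Real.pi) ^ (-(1 : ℝ) / 2) * Real.exp (-u ^ 2 / 2) := rfl
    _ ≤ 1 * Real.exp (-u ^ 2 / 2) := by nlinarith
    _ = Real.exp (-u ^ 2 / 2) := one_mul _

lemma expo1 (u : ℝ) :
    (|u| / 2 + 1 / 8) * Real.exp (-u ^ 2 / 2 + |u| / 2)
      ≤ 6 * Real.exp (-(1 / 8) * u ^ 2) := by
  have hx : 0 ≤ |u| := abs_nonneg u
  have hsq : |u| ^ 2 = u ^ 2 := sq_abs u
  have key : Real.exp (-u ^ 2 / 2 + |u| / 2)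
      = Real.exp (-(1 / 8) * u ^ 2) * Real.exp (-((3 / 8) * |u| ^ 2 - |u| / 2)) := by
    rw [← Real.exp_add]; congr 1; rw [hsq]; ring
  rw [key]
  have h := Real.add_one_le_exp ((3 / 8) * |u| ^ 2 - |u| / 2)
  have hE : Real.exp (-((3 / 8) * |u| ^ 2 - |u| / 2))
      = (Real.exp ((3 / 8) * |u| ^ 2 - |u| / 2))⁻¹ := Real.exp_neg _
  rw [hE]
  set e := Real.exp ((3 / 8) * |u| ^ 2 - |u| / 2) with he
  have hepos : 0 < e := Real.exp_pos _
  have hkey : |u| / 2 + 1 / 8 ≤ 6 * e := by nlinarith [sq_nonneg (|u| - 7/9)]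
  have hE8 : 0 < Real.exp (-(1 / 8) * u ^ 2) := Real.exp_pos _
  have hstep : (|u| / 2 + 1 / 8) * e⁻¹ ≤ 6 := by
    rw [show (|u| / 2 + 1 / 8) * e⁻¹ = (|u| / 2 + 1 / 8) / e from by ring,
      div_le_iff₀ hepos]
    linarith
  calc (|u| / 2 + 1 / 8) * (Real.exp (-(1 / 8) * u ^ 2) * e⁻¹)
      = ((|u| / 2 + 1 / 8) * e⁻¹) * Real.exp (-(1 / 8) * u ^ 2) := by ring
    _ ≤ 6 * Real.exp (-(1 / 8) * u ^ 2) := mul_le_mul_of_nonneg_right hstep hE8.le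

lemma expo2 (u : ℝ) :
    Real.exp (-u ^ 2 / 2 + |u| / 2) ≤ 2 * Real.exp (-(1 / 8) * u ^ 2) := by
  have hx : 0 ≤ |u| := abs_nonneg u
  have hsq : |u| ^ 2 = u ^ 2 := sq_abs u
  have key : Real.exp (-u ^ 2 / 2 + |u| / 2)
      = Real.exp (-(1 / 8) * u ^ 2) * Real.exp (-((3 / 8) * |u| ^ 2 - |u| / 2)) := by
    rw [← Real.exp_add]; congr 1; rw [hsq]; ring
  rw [key]
  have h := Real.add_one_le_exp ((3 / 8) * |u| ^ 2 - |u| / 2)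
  rw [Real.exp_neg]
  set e := Real.exp ((3 / 8) * |u| ^ 2 - |u| / 2) with he
  have hepos : 0 < e := Real.exp_pos _
  have hE8 : 0 < Real.exp (-(1 / 8) * u ^ 2) := Real.exp_pos _
  have hkey : e⁻¹ ≤ 2 := by
    rw [inv_le_comm₀ hepos (by norm_num : (0:ℝ) < 2)]
    nlinarith [sq_nonneg (|u| - 2/3)]
  nlinarith [mul_le_mul_of_nonneg_left hkey hE8.le]

lemma exp18_le : Real.exp (1 / 8 : ℝ) ≤ 8 / 7 := by
  have h := Real.add_one_le_exp (-(1/8) : ℝ)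
  have h2 : Real.exp (1/8 : ℝ) = (Real.exp (-(1/8) : ℝ))⁻¹ := by
    rw [← Real.exp_neg]; norm_num
  have hp : (0:ℝ) < Real.exp (-(1/8) : ℝ) := Real.exp_pos _
  rw [h2, inv_le_comm₀ hp (by norm_num : (0:ℝ) < 8/7)]
  linarith

section Pointwise

variable {t : ℝ} (ht : 0 < t) (ht1 : t ≤ 1) (α u : ℝ)

-- abbreviations via `have` in proofs; key pointwise facts:

lemma B_le (ht : 0 < t) (ht1 : t ≤ 1) (u : ℝ) :
    t * |u| / 2 + t ^ 2 / 8 ≤ t * (|u| / 2 + 1 / 8) := by nlinarith [abs_nonneg u]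

lemma B_le_one (ht : 0 < t) (ht1 : t ≤ 1) (u : ℝ) :
    t * |u| / 2 + t ^ 2 / 8 ≤ |u| / 2 + 1 / 8 := by nlinarith [abs_nonneg u]

lemma psi_le (ht : 0 < t) (ht1 : t ≤ 1) (α u : ℝ) :
    quantGaussUnnormalized t α u ≤ 3 * Real.exp (-(1 / 8) * u ^ 2) := by
  have hr := r_abs_le ht α u
  set r := (u ^ 2 - (qMid t α u) ^ 2) / 2 with hrdef
  have hB1 := B_le_one ht ht1 u
  have h1 : quantGaussUnnormalized t α u ≤ Real.exp (-u ^ 2 / 2) * Real.exp (|u| / 2 + 1 / 8) := by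
    rw [quantU_eq_exp]
    have e1 : Real.exp r ≤ Real.exp (|u| / 2 + 1 / 8) := by
      apply Real.exp_le_exp.mpr
      have := le_abs_self r
      linarith
    exact mul_le_mul (stdGauss_le u) e1 (Real.exp_pos _).le (Real.exp_pos _).le
  have h2 : Real.exp (-u ^ 2 / 2) * Real.exp (|u| / 2 + 1 / 8)
      = Real.exp (1 / 8 : ℝ) * Real.exp (-u ^ 2 / 2 + |u| / 2) := by
    rw [← Real.exp_add, ← Real.exp_add]; ring_nf
  have h3 := expo2 u
  have h4 := exp18_le
  have h5 : (0:ℝ) < Real.exp (-(1/8) * u ^ 2) := Real.exp_pos _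
  have h6 : (0:ℝ) ≤ Real.exp (-u ^ 2 / 2 + |u| / 2) := (Real.exp_pos _).le
  calc quantGaussUnnormalized t α u ≤ Real.exp (1 / 8 : ℝ) * Real.exp (-u ^ 2 / 2 + |u| / 2) := by
        rw [← h2]; exact h1
    _ ≤ (8/7) * (2 * Real.exp (-(1/8) * u ^ 2)) := by nlinarith [Real.exp_pos (1/8 : ℝ)]
    _ ≤ 3 * Real.exp (-(1/8) * u ^ 2) := by nlinarith

lemma psi_mul_le (ht : 0 < t) (ht1 : t ≤ 1) (α u : ℝ) :
    quantGaussUnnormalized t α u * |(u ^ 2 - (qMid t α u) ^ 2) / 2|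
      ≤ 7 * t * Real.exp (-(1 / 8) * u ^ 2) := by
  have hr := r_abs_le ht α u
  set r := (u ^ 2 - (qMid t α u) ^ 2) / 2 with hrdef
  have hB := B_le ht ht1 u
  have hB1 := B_le_one ht ht1 u
  have hrabs : |r| ≤ t * (|u| / 2 + 1 / 8) := le_trans hr hB
  have h1 : quantGaussUnnormalized t α u ≤ Real.exp (1/8 : ℝ) * Real.exp (-u ^ 2 / 2 + |u| / 2) := by
    rw [quantU_eq_exp]
    have e1 : Real.exp r ≤ Real.exp (|u| / 2 + 1/8) := by
      apply Real.exp_le_exp.mpr; have := le_abs_self r; linarith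
    calc stdGauss u * Real.exp r ≤ Real.exp (-u ^ 2 / 2) * Real.exp (|u| / 2 + 1/8) :=
        mul_le_mul (stdGauss_le u) e1 (Real.exp_pos _).le (Real.exp_pos _).le
      _ = Real.exp (1/8 : ℝ) * Real.exp (-u ^ 2 / 2 + |u| / 2) := by
          rw [← Real.exp_add, ← Real.exp_add]; ring_nf
  have hpsi_pos : 0 < quantGaussUnnormalized t α u := by
    rw [quantU_eq_mid]; exact stdGauss_pos _
  have h2 : quantGaussUnnormalized t α u * |r|
      ≤ (Real.exp (1/8 : ℝ) * Real.exp (-u ^ 2 / 2 + |u| / 2)) * (t * (|u| / 2 + 1/8)) :=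
    mul_le_mul h1 hrabs (abs_nonneg r) (by positivity)
  have h3 := expo1 u
  have h4 := exp18_le
  have hE : (0:ℝ) < Real.exp (-(1/8) * u ^ 2) := Real.exp_pos _
  have h6 : (0:ℝ) ≤ Real.exp (-u ^ 2 / 2 + |u| / 2) := (Real.exp_pos _).le
  calc quantGaussUnnormalized t α u * |r|
      ≤ (Real.exp (1/8 : ℝ) * Real.exp (-u ^ 2 / 2 + |u| / 2)) * (t * (|u| / 2 + 1/8)) := h2
    _ = (Real.exp (1/8 : ℝ) * t) * ((|u| / 2 + 1/8) * Real.exp (-u ^ 2 / 2 + |u| / 2)) := by ring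
    _ ≤ ((8/7) * t) * (6 * Real.exp (-(1/8) * u ^ 2)) := by
        apply mul_le_mul _ h3 (by positivity) (by positivity)
        nlinarith [Real.exp_pos (1/8 : ℝ)]
    _ ≤ 7 * t * Real.exp (-(1/8) * u ^ 2) := by nlinarith

lemma psi_upper (ht : 0 < t) (ht1 : t ≤ 1) (α u : ℝ) :
    quantGaussUnnormalized t α u ≤ stdGauss u + 7 * t * Real.exp (-(1 / 8) * u ^ 2) := by
  have hr := r_abs_le ht α u
  set r := (u ^ 2 - (qMid t α u) ^ 2) / 2 with hrdef
  have hphi := stdGauss_pos u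
  have hexp : Real.exp r * (1 - |r|) ≤ 1 := by
    rcases le_or_gt r 0 with h | h
    · have h1 : Real.exp r ≤ 1 := Real.exp_le_one_iff.mpr h
      nlinarith [abs_nonneg r, Real.exp_pos r]
    · have habs : |r| = r := abs_of_pos h
      rw [habs]
      have h2 := Real.add_one_le_exp (-r)
      have h3 : Real.exp (-r) = (Real.exp r)⁻¹ := Real.exp_neg r
      have h4 : 0 < Real.exp r := Real.exp_pos r
      rw [h3] at h2
      nlinarith [mul_le_mul_of_nonneg_right h2 h4.le,
        mul_inv_cancel₀ (ne_of_gt h4)]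
  have hmain : quantGaussUnnormalized t α u
      ≤ stdGauss u + quantGaussUnnormalized t α u * |r| := by
    rw [quantU_eq_exp]
    nlinarith [mul_le_mul_of_nonneg_left hexp hphi.le]
  calc quantGaussUnnormalized t α u ≤ stdGauss u + quantGaussUnnormalized t α u * |r| := hmain
    _ ≤ stdGauss u + 7 * t * Real.exp (-(1/8) * u ^ 2) := by
        have := psi_mul_le ht ht1 α u
        linarith

lemma psi_lower (ht : 0 < t) (ht1 : t ≤ 1) (α u : ℝ) :
    stdGauss u - 7 * t * Real.exp (-(1 / 8) * u ^ 2) ≤ quantGaussUnnormalized t α u := by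
  have hr := r_abs_le ht α u
  set r := (u ^ 2 - (qMid t α u) ^ 2) / 2 with hrdef
  have hphi := stdGauss_pos u
  have hexp : 1 - |r| ≤ Real.exp r := by
    have := Real.add_one_le_exp r
    have := neg_abs_le r
    linarith
  have hB := B_le ht ht1 u
  have h1 : stdGauss u - stdGauss u * |r| ≤ quantGaussUnnormalized t α u := by
    rw [quantU_eq_exp]
    nlinarith [mul_le_mul_of_nonneg_left hexp hphi.le]
  have h2 : stdGauss u * |r| ≤ 7 * t * Real.exp (-(1/8) * u ^ 2) := by
    have hb1 : stdGauss u * |r| ≤ Real.exp (-u ^ 2 / 2) * (t * (|u| / 2 + 1/8)) :=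
      mul_le_mul (stdGauss_le u) (le_trans hr hB) (abs_nonneg r) (Real.exp_pos _).le
    have hb2 : Real.exp (-u ^ 2 / 2) ≤ Real.exp (-u ^ 2 / 2 + |u| / 2) := by
      apply Real.exp_le_exp.mpr; have := abs_nonneg u; linarith
    have h3 := expo1 u
    have hE : (0:ℝ) < Real.exp (-(1/8) * u ^ 2) := Real.exp_pos _
    calc stdGauss u * |r| ≤ Real.exp (-u ^ 2 / 2) * (t * (|u| / 2 + 1/8)) := hb1
      _ = t * ((|u| / 2 + 1/8) * Real.exp (-u ^ 2 / 2)) := by ring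
      _ ≤ t * ((|u| / 2 + 1/8) * Real.exp (-u ^ 2 / 2 + |u| / 2)) := by
          apply mul_le_mul_of_nonneg_left _ ht.le
          apply mul_le_mul_of_nonneg_left hb2 (by positivity)
      _ ≤ t * (6 * Real.exp (-(1/8) * u ^ 2)) := mul_le_mul_of_nonneg_left h3 ht.le
      _ ≤ 7 * t * Real.exp (-(1/8) * u ^ 2) := by nlinarith
  linarith

end Pointwise

/- ### Measurability and integrability -/

lemma continuous_stdGauss : Continuous stdGauss := by
  unfold stdGauss
  exact continuous_const.mul (Real.continuous_exp.comp (by continuity))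

lemma measurable_qMid (t α : ℝ) : Measurable (qMid t α) := by
  unfold qMid
  apply measurable_const.add
  apply Measurable.mul _ measurable_const
  apply Measurable.add _ measurable_const
  exact Measurable.comp (by measurability) (((measurable_id.sub measurable_const).div_const t).floor)

lemma measurable_quantU (t α : ℝ) : Measurable (quantGaussUnnormalized t α) := by
  have : quantGaussUnnormalized t α = stdGauss ∘ qMid t α := rfl
  rw [this]
  exact continuous_stdGauss.measurable.comp (measurable_qMid t α)

lemma integrableE : Integrable (fun u : ℝ => Real.exp (-(1 / 8) * u ^ 2)) :=
  integrable_exp_neg_mul_sq (by norm_num)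

lemma integralE : (∫ u : ℝ, Real.exp (-(1 / 8) * u ^ 2)) = Real.sqrt (8 * Real.pi) := by
  rw [integral_gaussian]
  congr 1
  ring

lemma sqrt8pi_le : Real.sqrt (8 * Real.pi) ≤ 6 := by
  have h : (8 : ℝ) * Real.pi ≤ 36 := by nlinarith [Real.pi_le_four]
  have := Real.sqrt_le_sqrt h
  rwa [show (36 : ℝ) = 6 ^ 2 by norm_num, Real.sqrt_sq (by norm_num : (0:ℝ) ≤ 6)] at this

lemma integralE_le : (∫ u : ℝ, Real.exp (-(1 / 8) * u ^ 2)) ≤ 6 := by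
  rw [integralE]; exact sqrt8pi_le

lemma integralE_nonneg : 0 ≤ ∫ u : ℝ, Real.exp (-(1 / 8) * u ^ 2) :=
  integral_nonneg fun u => (Real.exp_pos _).le

lemma stdGauss_eq : stdGauss = fun u : ℝ =>
    (2 * Real.pi) ^ (-(1 : ℝ) / 2) * Real.exp (-(1 / 2) * u ^ 2) := by
  funext u
  unfold stdGauss
  congr 1
  ring_nf

lemma integrable_stdGauss : Integrable stdGauss := by
  rw [stdGauss_eq]
  exact (integrable_exp_neg_mul_sq (by norm_num)).const_mul _

lemma integral_stdGauss : (∫ u, stdGauss u) = 1 := by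
  rw [stdGauss_eq]
  rw [MeasureTheory.integral_const_mul, integral_gaussian]
  have h2 : Real.pi / (1 / 2) = 2 * Real.pi := by ring
  rw [h2]
  have hpos : (0:ℝ) < 2 * Real.pi := by positivity
  rw [Real.sqrt_eq_rpow, ← Real.rpow_add hpos]
  norm_num

lemma integrable_psi {t : ℝ} (ht : 0 < t) (ht1 : t ≤ 1) (α : ℝ) :
    Integrable (quantGaussUnnormalized t α) := by
  apply (integrableE.const_mul 3).mono' (measurable_quantU t α).aestronglyMeasurable
  filter_upwards with u
  rw [Real.norm_eq_abs, abs_of_pos (by rw [quantU_eq_mid]; exact stdGauss_pos _)]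
  exact psi_le ht ht1 α u

lemma integrable_psi_r {t : ℝ} (ht : 0 < t) (ht1 : t ≤ 1) (α : ℝ) :
    Integrable (fun u => quantGaussUnnormalized t α u * ((u ^ 2 - (qMid t α u) ^ 2) / 2)) := by
  apply (integrableE.const_mul (7 * t)).mono'
  · apply AEStronglyMeasurable.mul (measurable_quantU t α).aestronglyMeasurable
    apply Measurable.aestronglyMeasurable
    exact ((measurable_id.pow_const 2).sub ((measurable_qMid t α).pow_const 2)).div_const 2
  · filter_upwards with u
    rw [Real.norm_eq_abs, abs_mul,
      abs_of_pos (by rw [quantU_eq_mid]; exact stdGauss_pos _)]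
    have := psi_mul_le ht ht1 α u
    calc quantGaussUnnormalized t α u * |(u ^ 2 - qMid t α u ^ 2) / 2|
        ≤ 7 * t * Real.exp (-(1/8) * u ^ 2) := this
      _ = 7 * t * Real.exp (-(1/8) * u ^ 2) := rfl

/- ### The normalizing constant -/

lemma const_toReal_eq {t : ℝ} (ht : 0 < t) (ht1 : t ≤ 1) (α : ℝ) :
    (quantGaussConst t α).toReal = ∫ u, quantGaussUnnormalized t α u := by
  have h := ofReal_integral_eq_lintegral_ofReal (integrable_psi ht ht1 α)
    (Filter.Eventually.of_forall fun u => (by rw [quantU_eq_mid]; exact (stdGauss_pos _).le))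
  unfold quantGaussConst
  rw [← h, ENNReal.toReal_ofReal
    (integral_nonneg fun u => by rw [quantU_eq_mid]; exact (stdGauss_pos _).le)]

lemma integral_psi_bounds {t : ℝ} (ht : 0 < t) (ht1 : t ≤ 1) (α : ℝ) :
    1 - 42 * t ≤ (∫ u, quantGaussUnnormalized t α u) ∧
      (∫ u, quantGaussUnnormalized t α u) ≤ 1 + 42 * t := by
  have hintE := integrableE
  have hintφ := integrable_stdGauss
  have hintψ := integrable_psi ht ht1 α
  constructor
  · have hlow : (∫ u, stdGauss u - 7 * t * Real.exp (-(1/8) * u ^ 2))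
        ≤ ∫ u, quantGaussUnnormalized t α u := by
      apply integral_mono (hintφ.sub (hintE.const_mul (7 * t))) hintψ
      intro u
      have := psi_lower ht ht1 α u
      simpa [mul_assoc] using this
    have heq : (∫ u, stdGauss u - 7 * t * Real.exp (-(1/8) * u ^ 2))
        = 1 - 7 * t * ∫ u, Real.exp (-(1/8) * u ^ 2) := by
      rw [integral_sub hintφ (hintE.const_mul (7 * t)), integral_stdGauss,
        MeasureTheory.integral_const_mul]
    rw [heq] at hlow
    have h6 := integralE_le
    have h0 := integralE_nonneg
    nlinarith
  · have hup : (∫ u, quantGaussUnnormalized t α u)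
        ≤ ∫ u, stdGauss u + 7 * t * Real.exp (-(1/8) * u ^ 2) := by
      apply integral_mono hintψ (hintφ.add (hintE.const_mul (7 * t)))
      intro u
      have := psi_upper ht ht1 α u
      simpa [mul_assoc] using this
    have heq : (∫ u, stdGauss u + 7 * t * Real.exp (-(1/8) * u ^ 2))
        = 1 + 7 * t * ∫ u, Real.exp (-(1/8) * u ^ 2) := by
      rw [integral_add hintφ (hintE.const_mul (7 * t)), integral_stdGauss,
        MeasureTheory.integral_const_mul]
    rw [heq] at hup
    have h6 := integralE_le
    have h0 := integralE_nonneg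
    nlinarith

/- ### Main theorem -/

theorem quantized_gaussian_relative_entropy_convergence :
    ∀ ε : ℝ, 0 < ε → ∃ δ : ℝ, 0 < δ ∧ ∀ t : ℝ, 0 < t → t < δ →
      ∀ α ∈ Set.Icc (0 : ℝ) t,
        |∫ u, quantGauss t α u * Real.log (quantGauss t α u / stdGauss u)| < ε := by
  intro ε hε
  refine ⟨min (1 / 100) (ε / 200), by positivity, ?_⟩
  intro t ht htδ α _
  have ht1 : t ≤ 1 := by
    have := lt_of_lt_of_le htδ (min_le_left _ _); linarith
  have ht100 : t < 1 / 100 := lt_of_lt_of_le htδ (min_le_left _ _)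
  have htε : t < ε / 200 := lt_of_lt_of_le htδ (min_le_right _ _)
  -- notation
  set c : ℝ := (quantGaussConst t α).toReal with hcdef
  have hc_eq : c = ∫ u, quantGaussUnnormalized t α u := const_toReal_eq ht ht1 α
  obtain ⟨hclow, hchigh⟩ := integral_psi_bounds ht ht1 α
  rw [← hc_eq] at hclow hchigh
  have hcpos : (0:ℝ) < c := by nlinarith
  have hchalf : (1:ℝ)/2 ≤ c := by nlinarith
  -- the integrand rewrites
  have hψpos : ∀ u, 0 < quantGaussUnnormalized t α u := fun u => by
    rw [quantU_eq_mid]; exact stdGauss_pos _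
  have hrewrite : ∀ u, quantGauss t α u * Real.log (quantGauss t α u / stdGauss u)
      = c⁻¹ * (quantGaussUnnormalized t α u * ((u ^ 2 - (qMid t α u) ^ 2) / 2)
          - quantGaussUnnormalized t α u * Real.log c) := by
    intro u
    have hφ := stdGauss_pos u
    have hψ := hψpos u
    have hlogψ : Real.log (quantGaussUnnormalized t α u)
        = Real.log (stdGauss u) + (u ^ 2 - (qMid t α u) ^ 2) / 2 := by
      rw [quantU_eq_exp t α u, Real.log_mul (ne_of_gt hφ) (ne_of_gt (Real.exp_pos _)),
        Real.log_exp]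
    have h1 : quantGauss t α u / stdGauss u
        = quantGaussUnnormalized t α u / c / stdGauss u := by
      rw [quantGauss, hcdef]
    have hlog : Real.log (quantGauss t α u / stdGauss u)
        = (u ^ 2 - (qMid t α u) ^ 2) / 2 - Real.log c := by
      rw [h1, Real.log_div (by positivity) (ne_of_gt hφ),
        Real.log_div (ne_of_gt hψ) (ne_of_gt hcpos), hlogψ]
      ring
    rw [hlog, quantGauss, ← hcdef]
    field_simp
  rw [show (fun u => quantGauss t α u * Real.log (quantGauss t α u / stdGauss u))
      = fun u => c⁻¹ * (quantGaussUnnormalized t α u * ((u ^ 2 - (qMid t α u) ^ 2) / 2)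
          - quantGaussUnnormalized t α u * Real.log c) from funext hrewrite]
  have hintψ := integrable_psi ht ht1 α
  have hintψr := integrable_psi_r ht ht1 α
  rw [MeasureTheory.integral_const_mul, integral_sub hintψr (hintψ.mul_const _),
    MeasureTheory.integral_mul_const, ← hc_eq]
  -- bound A = ∫ ψ r
  set A : ℝ := ∫ u, quantGaussUnnormalized t α u * ((u ^ 2 - (qMid t α u) ^ 2) / 2) with hAdef
  have hA : |A| ≤ 42 * t := by
    have h := MeasureTheory.norm_integral_le_of_norm_le (μ := volume)
      (f := fun u => quantGaussUnnormalized t α u * ((u ^ 2 - (qMid t α u) ^ 2) / 2))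
      (g := fun u => 7 * t * Real.exp (-(1/8) * u ^ 2))
      (integrableE.const_mul (7 * t))
      (Filter.Eventually.of_forall fun u => by
        rw [Real.norm_eq_abs, abs_mul, abs_of_pos (hψpos u)]
        exact psi_mul_le ht ht1 α u)
    rw [Real.norm_eq_abs] at h
    have heq : (∫ u : ℝ, 7 * t * Real.exp (-(1/8) * u ^ 2))
        = 7 * t * ∫ u : ℝ, Real.exp (-(1/8) * u ^ 2) := MeasureTheory.integral_const_mul _ _
    rw [heq] at h
    have h6 := integralE_le
    have h0 := integralE_nonneg
    calc |A| ≤ 7 * t * ∫ u : ℝ, Real.exp (-(1/8) * u ^ 2) := h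
      _ ≤ 42 * t := by nlinarith
  -- bound log c
  have hlogc : |Real.log c| ≤ 84 * t := by
    have hub : Real.log c ≤ 42 * t := by
      have := Real.log_le_sub_one_of_pos hcpos
      linarith
    have hlb : -(84 * t) ≤ Real.log c := by
      have h1 : Real.log c⁻¹ ≤ c⁻¹ - 1 := Real.log_le_sub_one_of_pos (by positivity)
      rw [Real.log_inv] at h1
      have h2 : c⁻¹ ≤ 2 := by
        rw [inv_le_comm₀ hcpos (by norm_num : (0:ℝ) < 2)]
        linarith
      have h3 : c⁻¹ - 1 ≤ 84 * t := by
        have h4 : c⁻¹ - 1 = (1 - c) * c⁻¹ := by field_simp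
        rcases le_or_gt c 1 with hc1 | hc1
        · rw [h4]
          calc (1 - c) * c⁻¹ ≤ 42 * t * 2 :=
              mul_le_mul (by linarith) h2 (by positivity) (by positivity)
            _ = 84 * t := by ring
        · have : (1 - c) * c⁻¹ < 0 :=
            mul_neg_of_neg_of_pos (by linarith) (inv_pos.mpr hcpos)
          rw [h4]; nlinarith
      linarith
    rw [abs_le]; exact ⟨by linarith, by linarith⟩
  -- final estimate
  have hcinv : c⁻¹ ≤ 2 := by
    rw [inv_le_comm₀ hcpos (by norm_num : (0:ℝ) < 2)]; linarith
  have hfinal : |c⁻¹ * (A - c * Real.log c)| ≤ 168 * t := by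
    have h1 : |c⁻¹ * (A - c * Real.log c)| = c⁻¹ * |A - c * Real.log c| := by
      rw [abs_mul, abs_of_pos (inv_pos.mpr hcpos)]
    rw [h1]
    have h2 : |A - c * Real.log c| ≤ |A| + c * |Real.log c| := by
      calc |A - c * Real.log c| ≤ |A| + |c * Real.log c| := abs_sub _ _
        _ = |A| + c * |Real.log c| := by rw [abs_mul, abs_of_pos hcpos]
    have h3 : c⁻¹ * |A - c * Real.log c| ≤ c⁻¹ * (|A| + c * |Real.log c|) :=
      mul_le_mul_of_nonneg_left h2 (by positivity)
    have h4 : c⁻¹ * (|A| + c * |Real.log c|) = c⁻¹ * |A| + |Real.log c| := by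
      field_simp
    have h5 : c⁻¹ * |A| ≤ 2 * (42 * t) := by
      apply mul_le_mul hcinv hA (abs_nonneg A) (by norm_num)
    rw [h4] at h3
    linarith
  calc |c⁻¹ * (A - c * Real.log c)| ≤ 168 * t := hfinal
    _ < 168 * (ε / 200) := by nlinarith
    _ < ε := by linarith
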